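/- Let X ⊆ [0,1] be a nonempty closed set, let ε > 0, let r, n ∈ ℕ with r ≥ 1, and let a₁, …, aₙ ∈ C(X, M_r(ℂ)). Then there exist a closed subset Y ⊆ X which is a finite union of closed intervals (possibly degenerate), and a continuous map h : X → Y with h(y) = y for all y ∈ Y, such that the map ψ : C(Y, M_r(ℂ)) → C(X, M_r(ℂ)) defined by ψ(b) = b ∘ h is an injective unital *-homomorphism satisfying ‖ψ(a_l|_Y) − a_l‖ < ε (supremum norm) for l = 1, …, n. -/

import Mathlib

open scoped Matrix.Norms.L2Operator

open Set

/-- Gluing step: extend a retraction structure defined beyond `c'` by one clamp piece on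
`(c, c']`. -/
lemma combine_step (X : Set ℝ) (c c' α β δ : ℝ)
    (hαβ : α ≤ β) (hIcc : Set.Icc α β ⊆ X ∩ Set.Ioi c) (hβc' : β < c') (hc' : c' ∉ X)
    (hlow : ∀ x ∈ X ∩ Set.Ioi c, α - δ ≤ x)
    (hc'β : c' - β ≤ δ)
    (s' : Finset (ℝ × ℝ)) (f' : ℝ → ℝ)
    (hs' : ∀ q ∈ s', q.1 ≤ q.2 ∧ Set.Icc q.1 q.2 ⊆ X ∩ Set.Ioi c')
    (hf' : ∀ x ∈ X ∩ Set.Ioi c', ContinuousAt f' x ∧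
      f' x ∈ (⋃ q ∈ s', Set.Icc q.1 q.2) ∧ |f' x - x| ≤ δ)
    (hfix' : ∀ y ∈ (⋃ q ∈ s', Set.Icc q.1 q.2), f' y = y)
    (hcc' : c < c') :
    ∃ (s : Finset (ℝ × ℝ)) (f : ℝ → ℝ),
      (∀ q ∈ s, q.1 ≤ q.2 ∧ Set.Icc q.1 q.2 ⊆ X ∩ Set.Ioi c) ∧
      (∀ x ∈ X ∩ Set.Ioi c, ContinuousAt f x ∧
        f x ∈ (⋃ q ∈ s, Set.Icc q.1 q.2) ∧ |f x - x| ≤ δ) ∧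
      (∀ y ∈ (⋃ q ∈ s, Set.Icc q.1 q.2), f y = y) := by
  classical
  refine ⟨insert (α, β) s', fun z => if z ≤ c' then min (max z α) β else f' z, ?_, ?_, ?_⟩
  · intro q hq
    rcases Finset.mem_insert.mp hq with h | h
    · subst h; exact ⟨hαβ, hIcc⟩
    · exact ⟨(hs' q h).1, (hs' q h).2.trans (Set.inter_subset_inter_right X
        (Set.Ioi_subset_Ioi hcc'.le))⟩
  · intro x hx
    by_cases hxc' : x ≤ c'
    · have hxlt : x < c' := lt_of_le_of_ne hxc' (fun he => hc' (he ▸ hx.1))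
      have hev : ∀ᶠ z in nhds x, (fun z => min (max z α) β) z
          = (fun z => if z ≤ c' then min (max z α) β else f' z) z := by
        filter_upwards [Iio_mem_nhds hxlt] with z hz
        simp [le_of_lt (Set.mem_Iio.mp hz)]
      refine ⟨(((continuous_id.max continuous_const).min continuous_const).continuousAt).congr
        hev, ?_, ?_⟩
      · have : min (max x α) β ∈ Set.Icc α β := ⟨le_min (le_max_right _ _) hαβ,
          min_le_right _ _⟩
        simp only [hxc', if_pos]
        exact Set.mem_biUnion (Finset.mem_insert_self _ _) this
      · simp only [hxc', if_pos]
        have h1 : α - δ ≤ x := hlow x hx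
        rcases le_total x α with h | h
        · rw [max_eq_right h, min_eq_left hαβ, abs_of_nonneg (by linarith : (0:ℝ) ≤ α - x)]
          linarith
        · rcases le_total x β with h2 | h2
          · rw [max_eq_left h, min_eq_left h2]
            simp only [sub_self, abs_zero]
            linarith
          · rw [max_eq_left h, min_eq_right h2, abs_sub_comm,
              abs_of_nonneg (by linarith : (0:ℝ) ≤ x - β)]
            linarith
    · push_neg at hxc'
      have hx' : x ∈ X ∩ Set.Ioi c' := ⟨hx.1, hxc'⟩
      obtain ⟨hca, hmem, hdist⟩ := hf' x hx'
      have hev : f' =ᶠ[nhds x] (fun z => if z ≤ c' then min (max z α) β else f' z) := by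
        filter_upwards [Ioi_mem_nhds hxc'] with z hz
        simp [not_le.mpr (Set.mem_Ioi.mp hz)]
      refine ⟨hca.congr hev, ?_, ?_⟩
      · simp only [not_le.mpr hxc', if_neg, not_false_iff]
        exact Set.biUnion_subset_biUnion_left (fun q hq =>
          Finset.mem_insert_of_mem hq) hmem
      · simpa [not_le.mpr hxc'] using hdist
  · intro y hy
    rw [Set.mem_iUnion₂] at hy
    obtain ⟨q, hq, hyq⟩ := hy
    rcases Finset.mem_insert.mp hq with h | h
    · subst h
      have hy1 : α ≤ y := hyq.1
      have hy2 : y ≤ β := hyq.2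
      have : y ≤ c' := hy2.trans hβc'.le
      simp [this, max_eq_left hy1, min_eq_left hy2]
    · have hyX : y ∈ X ∩ Set.Ioi c' := (hs' q h).2 hyq
      have : ¬ y ≤ c' := not_le.mpr hyX.2
      simp only [this, if_neg, not_false_iff]
      exact hfix' y (Set.mem_biUnion h hyq)

lemma step_induction (X : Set ℝ) (hX1 : X ⊆ Set.Icc 0 1) (hcl : IsClosed X)
    (δ : ℝ) (hδ : 0 < δ) :
    ∀ k : ℕ, ∀ c : ℝ, c ∉ X → (X ∩ Set.Ioi c).Nonempty →
      (∀ x ∈ X ∩ Set.Ioi c, x ≤ sInf (X ∩ Set.Ioi c) + k * (δ / 4)) →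
      ∃ (s : Finset (ℝ × ℝ)) (f : ℝ → ℝ),
        (∀ q ∈ s, q.1 ≤ q.2 ∧ Set.Icc q.1 q.2 ⊆ X ∩ Set.Ioi c) ∧
        (∀ x ∈ X ∩ Set.Ioi c, ContinuousAt f x ∧
          f x ∈ (⋃ q ∈ s, Set.Icc q.1 q.2) ∧ |f x - x| ≤ δ) ∧
        (∀ y ∈ (⋃ q ∈ s, Set.Icc q.1 q.2), f y = y) := by
  classical
  intro k
  induction k with
  | zero =>
    intro c hc hne hbd
    set p := sInf (X ∩ Set.Ioi c) with hp
    have hbb : BddBelow (X ∩ Set.Ioi c) := ⟨0, fun x hx => (hX1 hx.1).1⟩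
    have hpX : p ∈ X := hcl.closure_subset
      ((closure_mono (Set.inter_subset_left)) (csInf_mem_closure hne hbb))
    have hple : ∀ x ∈ X ∩ Set.Ioi c, x = p := by
      intro x hx
      have h1 := csInf_le hbb hx
      have h2 := hbd x hx
      simp only [Nat.cast_zero, zero_mul, add_zero] at h2
      exact le_antisymm h2 h1
    have hpc : c < p := by
      obtain ⟨x, hx⟩ := hne
      have := hple x hx
      exact this ▸ hx.2
    refine ⟨{(p, p)}, fun _ => p, ?_, ?_, ?_⟩
    · intro q hq
      simp only [Finset.mem_singleton] at hq
      subst hq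
      refine ⟨le_refl _, ?_⟩
      simp only [Set.Icc_self, Set.singleton_subset_iff]
      exact ⟨hpX, hpc⟩
    · intro x hx
      refine ⟨continuousAt_const, ?_, ?_⟩
      · exact Set.mem_biUnion (Finset.mem_singleton_self _) (by simp)
      · rw [hple x hx]; simp; linarith
    · intro y hy
      simp only [Finset.mem_singleton, Set.mem_iUnion₂] at hy
      obtain ⟨q, hq, hyq⟩ := hy
      subst hq
      simp only [Set.Icc_self, Set.mem_singleton_iff] at hyq
      exact hyq.symm
  | succ k ih =>
    intro c hc hne hbd
    set p := sInf (X ∩ Set.Ioi c) with hp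
    have hbb : BddBelow (X ∩ Set.Ioi c) := ⟨0, fun x hx => (hX1 hx.1).1⟩
    have hpX : p ∈ X := hcl.closure_subset
      ((closure_mono (Set.inter_subset_left)) (csInf_mem_closure hne hbb))
    have hpc : c < p := by
      have hcp : c ≤ p := le_csInf hne (fun x hx => le_of_lt hx.2)
      rcases lt_or_eq_of_le hcp with h | h
      · exact h
      · exact absurd (h ▸ hpX) hc
    have hplex : ∀ x ∈ X ∩ Set.Ioi c, p ≤ x := fun x hx => csInf_le hbb hx
    -- common tail: given α β c' with the right properties, conclude
    have tail : ∀ α β c' : ℝ, α ≤ β → Set.Icc α β ⊆ X ∩ Set.Ioi c → β < c' → c' ∉ X →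
        α - δ ≤ p → c' - β ≤ δ → p + δ / 4 ≤ c' →
        ∃ (s : Finset (ℝ × ℝ)) (f : ℝ → ℝ),
          (∀ q ∈ s, q.1 ≤ q.2 ∧ Set.Icc q.1 q.2 ⊆ X ∩ Set.Ioi c) ∧
          (∀ x ∈ X ∩ Set.Ioi c, ContinuousAt f x ∧
            f x ∈ (⋃ q ∈ s, Set.Icc q.1 q.2) ∧ |f x - x| ≤ δ) ∧
          (∀ y ∈ (⋃ q ∈ s, Set.Icc q.1 q.2), f y = y) := by
      intro α β c' hαβ hIcc hβc' hc'X hαp hc'β hpc'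
      have hcc' : c < c' := lt_of_lt_of_le hpc (by linarith)
      have hIH : ∃ (s' : Finset (ℝ × ℝ)) (f' : ℝ → ℝ),
          (∀ q ∈ s', q.1 ≤ q.2 ∧ Set.Icc q.1 q.2 ⊆ X ∩ Set.Ioi c') ∧
          (∀ x ∈ X ∩ Set.Ioi c', ContinuousAt f' x ∧
            f' x ∈ (⋃ q ∈ s', Set.Icc q.1 q.2) ∧ |f' x - x| ≤ δ) ∧
          (∀ y ∈ (⋃ q ∈ s', Set.Icc q.1 q.2), f' y = y) := by
        by_cases hne' : (X ∩ Set.Ioi c').Nonempty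
        · refine ih c' hc'X hne' ?_
          intro x hx
          have hx0 : x ∈ X ∩ Set.Ioi c := ⟨hx.1, lt_trans hcc' hx.2⟩
          have h1 := hbd x hx0
          have h2 : c' ≤ sInf (X ∩ Set.Ioi c') :=
            le_csInf hne' (fun z hz => le_of_lt hz.2)
          push_cast at h1 ⊢
          linarith
        · rw [Set.not_nonempty_iff_eq_empty] at hne'
          refine ⟨∅, id, by simp, by simp [hne'], by simp⟩
      obtain ⟨s', f', hs', hf', hfix'⟩ := hIH
      exact combine_step X c c' α β δ hαβ hIcc hβc' hc'X
        (fun x hx => le_trans (by linarith) (hplex x hx)) hc'β s' f' hs' hf' hfix' hcc'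
    by_cases hA : Set.Icc (p + δ / 4) (p + δ / 2) ⊆ X
    · -- interval case
      set T : Set ℝ := {t | p + δ / 4 ≤ t ∧ Set.Icc (p + δ / 4) t ⊆ X} with hT
      have hTne : T.Nonempty := ⟨p + δ / 2, by constructor <;> [linarith; exact hA]⟩
      have hTsub : T ⊆ X := fun t ht => ht.2 ⟨ht.1, le_refl _⟩
      have hTbdd : BddAbove T := ⟨1, fun t ht => (hX1 (hTsub ht)).2⟩
      set β := sSup T with hβ
      have hβX : β ∈ X := hcl.closure_subset (closure_mono hTsub (csSup_mem_closure hTne hTbdd))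
      have hβge : p + δ / 2 ≤ β := le_csSup hTbdd ⟨by linarith, hA⟩
      have hIccβ : Set.Icc (p + δ / 4) β ⊆ X := by
        intro y hy
        rcases lt_or_eq_of_le hy.2 with h | h
        · obtain ⟨t, ht, hyt⟩ := exists_lt_of_lt_csSup hTne h
          exact ht.2 ⟨hy.1, le_of_lt hyt⟩
        · exact h ▸ hβX
      have hcut : ∃ c' ∈ Set.Ioo β (β + δ / 4), c' ∉ X := by
        by_contra hcon
        push_neg at hcon
        have : β + δ / 8 ∈ T := by
          refine ⟨by linarith, ?_⟩
          intro z hz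
          rcases le_or_gt z β with h | h
          · exact hIccβ ⟨hz.1, h⟩
          · exact hcon z ⟨h, by linarith [hz.2]⟩
        have := le_csSup hTbdd this
        linarith
      obtain ⟨c', hc'mem, hc'X⟩ := hcut
      rw [Set.mem_Ioo] at hc'mem
      refine tail (p + δ / 4) β c' (by linarith) ?_ hc'mem.1 hc'X (by linarith)
        (by linarith [hc'mem.2]) (by linarith)
      intro z hz
      exact ⟨hIccβ hz, lt_of_lt_of_le hpc (by linarith [hz.1])⟩
    · -- point case
      rw [Set.not_subset] at hA
      obtain ⟨c', hc'mem, hc'X⟩ := hA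
      rw [Set.mem_Icc] at hc'mem
      refine tail p p c' (le_refl _) ?_ (lt_of_lt_of_le (by linarith) hc'mem.1) hc'X
        (by linarith) (by linarith [hc'mem.2]) hc'mem.1
      intro z hz
      rw [Set.Icc_self, Set.mem_singleton_iff] at hz
      subst hz
      exact ⟨hpX, hpc⟩

lemma retract_exists (X : Set ℝ) (hX1 : X ⊆ Set.Icc 0 1) (hne : X.Nonempty)
    (hcl : IsClosed X) (δ : ℝ) (hδ : 0 < δ) :
    ∃ (s : Finset (ℝ × ℝ)) (f : ℝ → ℝ),
      (∀ q ∈ s, q.1 ≤ q.2 ∧ Set.Icc q.1 q.2 ⊆ X) ∧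
      (∀ x ∈ X, ContinuousAt f x ∧
        f x ∈ (⋃ q ∈ s, Set.Icc q.1 q.2) ∧ |f x - x| ≤ δ) ∧
      (∀ y ∈ (⋃ q ∈ s, Set.Icc q.1 q.2), f y = y) := by
  have hXI : X ∩ Set.Ioi (-1) = X := by
    apply Set.inter_eq_left.mpr
    intro x hx
    have := (hX1 hx).1
    simp only [Set.mem_Ioi]
    linarith
  have hm1 : (-1 : ℝ) ∉ X := fun h => by linarith [(hX1 h).1]
  have hmeas : ∀ x ∈ X ∩ Set.Ioi (-1 : ℝ), x ≤ sInf (X ∩ Set.Ioi (-1 : ℝ)) + ⌈4 / δ⌉₊ * (δ / 4) := by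
    rw [hXI]
    intro x hx
    have h1 : x ≤ 1 := (hX1 hx).2
    have h2 : 0 ≤ sInf X := le_csInf hne (fun z hz => (hX1 hz).1)
    have h3 : (4 : ℝ) / δ ≤ ⌈4 / δ⌉₊ := Nat.le_ceil _
    have h4 : (4 / δ) * (δ / 4) = 1 := by field_simp
    have h5 : (1 : ℝ) ≤ ⌈4 / δ⌉₊ * (δ / 4) := by
      rw [← h4]
      apply mul_le_mul_of_nonneg_right h3
      positivity
    linarith
  obtain ⟨s, f, h1, h2, h3⟩ := step_induction X hX1 hcl δ hδ ⌈4 / δ⌉₊ (-1) hm1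
    (by rw [hXI]; exact hne) hmeas
  rw [hXI] at h1 h2
  exact ⟨s, f, h1, h2, h3⟩

/-- Let `X ⊆ [0,1]` be nonempty and closed, `ε > 0`, `r ≥ 1`, and `a₁, …, aₙ ∈ C(X, M_r(ℂ))`.
Then there are a closed set `Y ⊆ X` which is a finite union of closed intervals (possibly
degenerate) and a continuous retraction `h : X → Y` such that `ψ : C(Y, M_r(ℂ)) → C(X, M_r(ℂ))`,
`ψ(b) = b ∘ h`, is an injective unital *-homomorphism with `‖ψ(aₗ|_Y) − aₗ‖ < ε` in the
supremum norm, for `l = 1, …, n`. -/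
theorem exists_interval_subalgebra_approx (X : Set ℝ) (hX1 : X ⊆ Set.Icc 0 1)
    (hne : X.Nonempty) (hcl : IsClosed X) (ε : ℝ) (hε : 0 < ε) (r n : ℕ) (hr : 1 ≤ r)
    (a : Fin n → C(X, Matrix (Fin r) (Fin r) ℂ)) :
    ∃ (Y : Set ℝ) (hYX : Y ⊆ X), IsClosed Y ∧
      (∃ s : Finset (ℝ × ℝ), (∀ p ∈ s, p.1 ≤ p.2) ∧ Y = ⋃ p ∈ s, Set.Icc p.1 p.2) ∧
      ∃ h : C(X, Y),
        (∀ y : X, (y : ℝ) ∈ Y → ((h y : ℝ) = (y : ℝ))) ∧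
        Function.Injective
          (fun b : C(Y, Matrix (Fin r) (Fin r) ℂ) => b.comp h) ∧
        ((1 : C(Y, Matrix (Fin r) (Fin r) ℂ)).comp h = 1) ∧
        (∀ b₁ b₂ : C(Y, Matrix (Fin r) (Fin r) ℂ),
          (b₁ * b₂).comp h = b₁.comp h * b₂.comp h) ∧
        (∀ b₁ b₂ : C(Y, Matrix (Fin r) (Fin r) ℂ),
          (b₁ + b₂).comp h = b₁.comp h + b₂.comp h) ∧
        (∀ (μ : ℂ) (b : C(Y, Matrix (Fin r) (Fin r) ℂ)),
          (μ • b).comp h = μ • b.comp h) ∧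
        (∀ b : C(Y, Matrix (Fin r) (Fin r) ℂ), (star b).comp h = star (b.comp h)) ∧
        (∀ l : Fin n,
          (⨆ x : X,
            ‖(((a l).comp ⟨Set.inclusion hYX, continuous_inclusion hYX⟩).comp h) x
              - (a l) x‖) < ε) := by
  classical
  haveI : Nonempty X := hne.to_subtype
  have hXc : IsCompact X := isCompact_Icc.of_isClosed_subset hcl hX1
  haveI : CompactSpace X := isCompact_iff_compactSpace.mp hXc
  -- uniform continuity of all a l simultaneously
  set g : X → (Fin n → Matrix (Fin r) (Fin r) ℂ) := fun x l => a l x with hg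
  have hgc : Continuous g := continuous_pi fun l => (a l).continuous
  have hguc : UniformContinuous g := CompactSpace.uniformContinuous_of_continuous hgc
  obtain ⟨δ₀, hδ₀, hmod⟩ := Metric.uniformContinuous_iff.mp hguc (ε / 2) (half_pos hε)
  obtain ⟨s, f, hs, hf, hfix⟩ := retract_exists X hX1 hne hcl (δ₀ / 2) (half_pos hδ₀)
  set Y : Set ℝ := ⋃ q ∈ s, Set.Icc q.1 q.2 with hY
  have hYX : Y ⊆ X := by
    intro y hy
    rw [hY, Set.mem_iUnion₂] at hy
    obtain ⟨q, hq, hyq⟩ := hy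
    exact (hs q hq).2 hyq
  have hYcl : IsClosed Y := by
    rw [hY]
    exact Set.Finite.isClosed_biUnion s.finite_toSet (fun _ _ => isClosed_Icc)
  have hfX : ∀ x : X, f (x : ℝ) ∈ Y := fun x => (hf x x.2).2.1
  have hcont : Continuous (X.restrict f) := by
    refine continuousOn_iff_continuous_restrict.mp ?_
    exact fun x hx => ((hf x hx).1).continuousWithinAt
  set h : C(X, Y) := ⟨fun x => ⟨f (x : ℝ), hfX x⟩, hcont.subtype_mk _⟩ with hh
  have hretr : ∀ y : X, (y : ℝ) ∈ Y → ((h y : ℝ) = (y : ℝ)) := fun y hy => hfix _ hy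
  have hsurj : ∀ y : Y, h ⟨(y : ℝ), hYX y.2⟩ = y := by
    intro y
    exact Subtype.ext (hfix _ y.2)
  refine ⟨Y, hYX, hYcl, ⟨s, fun q hq => (hs q hq).1, rfl⟩, h, hretr, ?_, rfl,
    fun _ _ => rfl, fun _ _ => rfl, fun _ _ => rfl, fun _ => rfl, ?_⟩
  · intro b₁ b₂ hb
    refine ContinuousMap.ext fun y => ?_
    have := ContinuousMap.congr_fun hb ⟨(y : ℝ), hYX y.2⟩
    simpa [hsurj y] using this
  · intro l
    have key : ∀ x : X,
        ‖(((a l).comp ⟨Set.inclusion hYX, continuous_inclusion hYX⟩).comp h) x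
          - (a l) x‖ ≤ ε / 2 := by
      intro x
      set w : X := ⟨f (x : ℝ), hYX (hfX x)⟩ with hw
      have heval : (((a l).comp ⟨Set.inclusion hYX, continuous_inclusion hYX⟩).comp h) x
          = a l w := rfl
      rw [heval, ← dist_eq_norm]
      have hdist : dist w x < δ₀ := by
        rw [Subtype.dist_eq, Real.dist_eq]
        have := (hf x x.2).2.2
        calc |(w : ℝ) - (x : ℝ)| ≤ δ₀ / 2 := this
        _ < δ₀ := by linarith
      have := hmod hdist
      calc dist (a l w) (a l x) ≤ dist (g w) (g x) := dist_le_pi_dist (g w) (g x) l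
      _ ≤ ε / 2 := (this).le
    calc (⨆ x : X, ‖(((a l).comp ⟨Set.inclusion hYX, continuous_inclusion hYX⟩).comp h) x
          - (a l) x‖) ≤ ε / 2 := ciSup_le key
    _ < ε := by linarith
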